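/- Let H be an r × n matrix over 𝔽₂ of rank r, with columns h₁,…,hₙ, and let d⊥ be the minimum Hamming weight of a nonzero element of the row space of H. Let S ⊆ {1,…,n} with |S| > n − d⊥, let ε ∈ 𝔽₂ⁿ be supported on S, let e ∈ 𝔽₂ⁿ be supported on the complement of S, and define f : 𝔽₂ⁿ → 𝔽₂ⁿ by f(x)_i = ε_i for i ∈ S and f(x)_i = x_i + e_i for i ∉ S. Then for every m ∈ 𝔽₂^r and every t ∈ 𝔽₂^r, writing A = {x ∈ 𝔽₂ⁿ : Hx = m and H·f(x) = t} and B = {κ : ({1,…,n} \ S) → 𝔽₂ : Hε + He + Σ_{i∉S} κ_i·h_i = t}, one has |A| · 2^{n−|S|} = |B| · 2^{n−r}. (That is, the tampering-experiment output Dec(f(Enc(m))) is distributed exactly as the message-independent distribution D_f = Hε + He + Σ_{i∉S} h_i·K_i with the K_i independent uniform bits.) -/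

import Mathlib

/-- **The tampering-experiment output is distributed as the message-independent
distribution `D_f`.**

`H` is an `r × n` matrix over `𝔽₂` of rank `r` (i.e. `x ↦ H x` surjective),
with columns `h i = Hᵀ i`, and `dperp` is a lower bound on the Hamming weight
of the nonzero elements of its row space.  `S` is a set of positions of size
`> n - dperp`, `ε` is supported on `S`, `e` is supported off `S`, and the
tampering function is `f x = fun i => if i ∈ S then ε i else x i + e i`.
Then, with
`A = {x : H x = m ∧ H (f x) = t}` and
`B = {κ : (Sᶜ → 𝔽₂) : H ε + H e + ∑_{i ∉ S} κ i • h i = t}`,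
one has `|A| · 2 ^ (n - |S|) = |B| · 2 ^ (n - r)`; i.e. the probability that
`Dec (f (Enc m)) = t` equals the probability that `D_f = t` where
`D_f = H ε + H e + ∑_{i ∉ S} h i • K i` with the `K i` independent uniform
bits. -/
theorem tamper_distribution_eq_Df
    {r n : ℕ} (H : Matrix (Fin r) (Fin n) (ZMod 2)) (dperp : ℕ)
    (hd : ∀ y : Fin r → ZMod 2, Matrix.vecMul y H ≠ 0 →
      dperp ≤ hammingNorm (Matrix.vecMul y H))
    (hrank : Function.Surjective (fun x : Fin n → ZMod 2 => H.mulVec x))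
    (S : Finset (Fin n)) (hS : n - dperp < S.card)
    (ε : Fin n → ZMod 2) (hε : ∀ i ∉ S, ε i = 0)
    (e : Fin n → ZMod 2) (he : ∀ i ∈ S, e i = 0)
    (m t : Fin r → ZMod 2) :
    Nat.card {x : Fin n → ZMod 2 //
        H.mulVec x = m ∧
        H.mulVec (fun i => if i ∈ S then ε i else x i + e i) = t}
      * 2 ^ (n - S.card) =
    Nat.card {κ : {i : Fin n // i ∈ Sᶜ} → ZMod 2 //
        H.mulVec ε + H.mulVec e + ∑ i, κ i • H.transpose ↑i = t}
      * 2 ^ (n - r) := by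
  classical
  set g : ({i : Fin n // i ∈ S} → ZMod 2) →ₗ[ZMod 2] (Fin r → ZMod 2) :=
    (H.submatrix id (Subtype.val : {i : Fin n // i ∈ S} → Fin n)).mulVecLin with hgdef
  -- the splitting identity
  have hsplit : ∀ x : Fin n → ZMod 2, H.mulVec x =
      g (fun i : {i : Fin n // i ∈ S} => x i.1)
        + ∑ i : {i : Fin n // i ∈ Sᶜ}, x i.1 • H.transpose i.1 := by
    intro x
    funext j
    simp only [hgdef, Matrix.mulVecLin_apply, Matrix.mulVec, dotProduct,
      Pi.add_apply, Finset.sum_apply, Pi.smul_apply, Matrix.submatrix_apply, id,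
      Matrix.transpose_apply, smul_eq_mul]
    rw [← Finset.sum_add_sum_compl S (fun i => H j i * x i),
      ← Finset.sum_coe_sort S, ← Finset.sum_coe_sort Sᶜ]
    simp [mul_comm]
  -- surjectivity of g
  have hgs : Function.Surjective g := by
    by_contra hns
    have hlt : LinearMap.range g < ⊤ :=
      lt_top_iff_ne_top.mpr fun hr => hns (LinearMap.range_eq_top.mp hr)
    obtain ⟨φ, hφ0, hφ⟩ :=
      Submodule.exists_dual_map_eq_bot_of_lt_top hlt inferInstance
    set y : Fin r → ZMod 2 := fun j => φ (Pi.single j (1 : ZMod 2)) with hy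
    have hφy : ∀ v : Fin r → ZMod 2, φ v = ∑ j, v j * y j := by
      intro v
      conv_lhs => rw [← Finset.univ_sum_single v]
      rw [map_sum]
      refine Finset.sum_congr rfl fun j _ => ?_
      have hsingle : Pi.single j (v j) = (v j • Pi.single j 1 : Fin r → ZMod 2) := by
        funext k
        by_cases hk : k = j <;> simp [Pi.single_apply, hk]
      rw [hsingle, map_smul, smul_eq_mul]
    have hrange0 : ∀ v ∈ LinearMap.range g, φ v = 0 := by
      intro v hv
      have : φ v ∈ (LinearMap.range g).map φ := Submodule.mem_map_of_mem hv
      rw [hφ] at this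
      exact (Submodule.mem_bot _).mp this
    have hyH : ∀ i ∈ S, Matrix.vecMul y H i = 0 := by
      intro i hi
      have hmem : (fun j => H j i) ∈ LinearMap.range g := by
        refine ⟨Pi.single ⟨i, hi⟩ 1, ?_⟩
        funext j
        simp [hgdef, Matrix.mulVecLin_apply, Matrix.mulVec_single]
      have h0 := hrange0 _ hmem
      rw [hφy] at h0
      simpa [Matrix.vecMul, dotProduct, mul_comm] using h0
    have hyne : y ≠ 0 := by
      intro hy0
      apply hφ0
      refine LinearMap.ext fun v => ?_
      rw [hφy]
      simp [hy0]
    have hvmne : Matrix.vecMul y H ≠ 0 := by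
      intro h0
      apply hyne
      funext j
      obtain ⟨x, hx⟩ := hrank (Pi.single j 1)
      have hdp := Matrix.dotProduct_mulVec y H x
      simp only at hx
      rw [hx, h0] at hdp
      simpa using hdp
    have hdle := hd y hvmne
    have hsub : ({i | Matrix.vecMul y H i ≠ 0} : Finset (Fin n)) ⊆ Sᶜ := by
      intro i hi
      simp only [Finset.mem_filter, Finset.mem_univ, true_and, ne_eq] at hi
      exact Finset.mem_compl.mpr fun hiS => hi (hyH i hiS)
    have hle : hammingNorm (Matrix.vecMul y H) ≤ n - S.card := by
      calc hammingNorm (Matrix.vecMul y H) ≤ (Sᶜ).card := Finset.card_le_card hsub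
      _ = n - S.card := by rw [Finset.card_compl, Fintype.card_fin]
    have hSn : S.card ≤ n := by simpa using Finset.card_le_univ S
    omega
  -- `H ε` and `H e`
  have hgε : H.mulVec ε = g (fun i : {i : Fin n // i ∈ S} => ε i.1) := by
    rw [hsplit ε]
    have h0 : ∑ i : {i : Fin n // i ∈ Sᶜ}, ε i.1 • H.transpose i.1 = 0 :=
      Finset.sum_eq_zero fun i _ => by
        rw [hε i.1 (Finset.mem_compl.mp i.2), zero_smul]
    rw [h0, add_zero]
  have hge : H.mulVec e = ∑ i : {i : Fin n // i ∈ Sᶜ}, e i.1 • H.transpose i.1 := by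
    rw [hsplit e]
    have h0 : (fun i : {i : Fin n // i ∈ S} => e i.1) = 0 :=
      funext fun i => he i.1 i.2
    rw [h0, map_zero, zero_add]
  -- the image of the tampering function
  have hfx : ∀ x : Fin n → ZMod 2,
      H.mulVec (fun i => if i ∈ S then ε i else x i + e i)
        = H.mulVec ε + H.mulVec e
          + ∑ i : {i : Fin n // i ∈ Sᶜ}, x i.1 • H.transpose i.1 := by
    intro x
    rw [hsplit (fun i => if i ∈ S then ε i else x i + e i)]
    have h1 : (fun i : {i : Fin n // i ∈ S} =>
        (fun i' => if i' ∈ S then ε i' else x i' + e i') i.1)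
          = fun i : {i : Fin n // i ∈ S} => ε i.1 :=
      funext fun i => if_pos i.2
    have h2 : ∑ i : {i : Fin n // i ∈ Sᶜ},
        (fun i' => if i' ∈ S then ε i' else x i' + e i') i.1 • H.transpose i.1
          = (∑ i : {i : Fin n // i ∈ Sᶜ}, x i.1 • H.transpose i.1)
            + ∑ i : {i : Fin n // i ∈ Sᶜ}, e i.1 • H.transpose i.1 := by
      rw [← Finset.sum_add_distrib]
      refine Finset.sum_congr rfl fun i _ => ?_
      show (if i.1 ∈ S then ε i.1 else x i.1 + e i.1) • _ = _
      rw [if_neg (Finset.mem_compl.mp i.2), add_smul]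
    rw [h1, h2, hgε, hge]
    abel
  -- pointwise description of the combination map
  have hptS : ∀ (κ : {i : Fin n // i ∈ Sᶜ} → ZMod 2)
      (u : {i : Fin n // i ∈ S} → ZMod 2) (i : {i : Fin n // i ∈ S}),
      (if hi : (i : Fin n) ∈ S then u ⟨i, hi⟩
        else κ ⟨i, Finset.mem_compl.mpr hi⟩) = u i :=
    fun κ u i => dif_pos i.2
  have hptC : ∀ (κ : {i : Fin n // i ∈ Sᶜ} → ZMod 2)
      (u : {i : Fin n // i ∈ S} → ZMod 2) (i : {i : Fin n // i ∈ Sᶜ}),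
      (if hi : (i : Fin n) ∈ S then u ⟨i, hi⟩
        else κ ⟨i, Finset.mem_compl.mpr hi⟩) = κ i :=
    fun κ u i => dif_neg (Finset.mem_compl.mp i.2)
  -- the main bijection
  have hA : Nat.card {x : Fin n → ZMod 2 //
        H.mulVec x = m ∧
        H.mulVec (fun i => if i ∈ S then ε i else x i + e i) = t}
      = Nat.card {κ : {i : Fin n // i ∈ Sᶜ} → ZMod 2 //
          H.mulVec ε + H.mulVec e + ∑ i, κ i • H.transpose ↑i = t}
        * Nat.card (LinearMap.ker g) := by
    rw [← Nat.card_prod]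
    refine Nat.card_congr ⟨fun x =>
      (⟨fun i => x.1 i.1, by
          beta_reduce
          rw [← hfx x.1]
          exact x.2.2⟩,
       ⟨(fun i : {i : Fin n // i ∈ S} => x.1 i.1)
          - Function.surjInv hgs
              (m - ∑ i : {i : Fin n // i ∈ Sᶜ}, x.1 i.1 • H.transpose i.1), by
          rw [LinearMap.mem_ker, map_sub, Function.surjInv_eq hgs, sub_eq_zero]
          exact eq_sub_of_add_eq ((hsplit x.1).symm.trans x.2.1)⟩),
      fun p => ⟨fun i' => if hi : i' ∈ S then
          (p.2.1 + Function.surjInv hgs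
            (m - ∑ i : {i : Fin n // i ∈ Sᶜ}, p.1.1 i • H.transpose i.1)) ⟨i', hi⟩
        else p.1.1 ⟨i', Finset.mem_compl.mpr hi⟩, ?cond1, ?cond2⟩,
      fun x => ?_, fun p => ?_⟩
    case cond1 =>
      rw [hsplit]
      have h1 : (fun i : {i : Fin n // i ∈ S} =>
          if hi : (i : Fin n) ∈ S then
            (p.2.1 + Function.surjInv hgs
              (m - ∑ i : {i : Fin n // i ∈ Sᶜ}, p.1.1 i • H.transpose i.1)) ⟨i, hi⟩
          else p.1.1 ⟨i, Finset.mem_compl.mpr hi⟩)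
            = p.2.1 + Function.surjInv hgs
              (m - ∑ i : {i : Fin n // i ∈ Sᶜ}, p.1.1 i • H.transpose i.1) :=
        funext fun i => hptS _ _ i
      have h2 : ∑ i : {i : Fin n // i ∈ Sᶜ},
          (if hi : (i : Fin n) ∈ S then
            (p.2.1 + Function.surjInv hgs
              (m - ∑ i : {i : Fin n // i ∈ Sᶜ}, p.1.1 i • H.transpose i.1)) ⟨i, hi⟩
          else p.1.1 ⟨i, Finset.mem_compl.mpr hi⟩) • H.transpose i.1
            = ∑ i : {i : Fin n // i ∈ Sᶜ}, p.1.1 i • H.transpose i.1 :=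
        Finset.sum_congr rfl fun i _ => by rw [hptC]
      rw [h1, h2, map_add, Function.surjInv_eq hgs]
      have h3 : g p.2.1 = 0 := p.2.2
      rw [h3]
      abel
    case cond2 =>
      rw [hfx]
      have h2 : ∑ i : {i : Fin n // i ∈ Sᶜ},
          (if hi : (i : Fin n) ∈ S then
            (p.2.1 + Function.surjInv hgs
              (m - ∑ i : {i : Fin n // i ∈ Sᶜ}, p.1.1 i • H.transpose i.1)) ⟨i, hi⟩
          else p.1.1 ⟨i, Finset.mem_compl.mpr hi⟩) • H.transpose i.1
            = ∑ i : {i : Fin n // i ∈ Sᶜ}, p.1.1 i • H.transpose i.1 :=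
        Finset.sum_congr rfl fun i _ => by rw [hptC]
      rw [h2]
      exact p.1.2
    · -- left inverse
      apply Subtype.ext
      funext i
      by_cases hi : i ∈ S
      · show (if hi' : i ∈ S then _ else _) = x.1 i
        rw [dif_pos hi]
        simp
      · show (if hi' : i ∈ S then _ else _) = x.1 i
        rw [dif_neg hi]
    · -- right inverse
      ext : 1
      · apply Subtype.ext
        funext i
        exact hptC _ _ i
      · apply Subtype.ext
        have h1 : (fun i : {i : Fin n // i ∈ S} =>
            (fun i' => if hi : i' ∈ S then
              (p.2.1 + Function.surjInv hgs
                (m - ∑ i : {i : Fin n // i ∈ Sᶜ}, p.1.1 i • H.transpose i.1)) ⟨i', hi⟩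
            else p.1.1 ⟨i', Finset.mem_compl.mpr hi⟩) i.1)
              = p.2.1 + Function.surjInv hgs
                (m - ∑ i : {i : Fin n // i ∈ Sᶜ}, p.1.1 i • H.transpose i.1) :=
          funext fun i => hptS _ _ i
        have h2 : ∑ i : {i : Fin n // i ∈ Sᶜ},
            (fun i' => if hi : i' ∈ S then
              (p.2.1 + Function.surjInv hgs
                (m - ∑ i : {i : Fin n // i ∈ Sᶜ}, p.1.1 i • H.transpose i.1)) ⟨i', hi⟩
            else p.1.1 ⟨i', Finset.mem_compl.mpr hi⟩) i.1 • H.transpose i.1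
              = ∑ i : {i : Fin n // i ∈ Sᶜ}, p.1.1 i • H.transpose i.1 :=
          Finset.sum_congr rfl fun i _ => by
            show (if hi : (i : Fin n) ∈ S then _ else _) • _ = _
            rw [hptC]
        show (fun i : {i : Fin n // i ∈ S} => _) - Function.surjInv hgs _ = p.2.1
        rw [h1, h2, add_sub_cancel_right]
  -- cardinality of the kernel
  have hker : Nat.card (LinearMap.ker g) * 2 ^ r = 2 ^ S.card := by
    obtain ⟨q, hq⟩ := Submodule.exists_isCompl (LinearMap.ker g)
    have E : ((LinearMap.ker g) × q) ≃ₗ[ZMod 2] ({i : Fin n // i ∈ S} → ZMod 2) :=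
      Submodule.prodEquivOfIsCompl _ _ hq
    have E2 : q ≃ₗ[ZMod 2] (Fin r → ZMod 2) :=
      (Submodule.quotientEquivOfIsCompl _ _ hq).symm.trans
        (g.quotKerEquivRange.trans
          (LinearEquiv.ofTop _ (LinearMap.range_eq_top.mpr hgs)))
    have h1 : Nat.card ({i : Fin n // i ∈ S} → ZMod 2)
        = Nat.card (LinearMap.ker g) * Nat.card q := by
      rw [Nat.card_congr E.symm.toEquiv, Nat.card_prod]
    have h2 : Nat.card q = 2 ^ r := by
      rw [Nat.card_congr E2.toEquiv]
      simp [Nat.card_eq_fintype_card]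
    have h3 : Nat.card ({i : Fin n // i ∈ S} → ZMod 2) = 2 ^ S.card := by
      simp [Nat.card_eq_fintype_card]
    rw [← h2, ← h3, h1]
  -- final arithmetic
  have hSn : S.card ≤ n := by simpa using Finset.card_le_univ S
  have hrS : r ≤ S.card := by
    have hdvd : (2 : ℕ) ^ r ∣ 2 ^ S.card :=
      ⟨Nat.card (LinearMap.ker g), by rw [← hker]; ring⟩
    exact (Nat.pow_dvd_pow_iff_le_right one_lt_two).mp hdvd
  have e2 : n - S.card + S.card = n := Nat.sub_add_cancel hSn
  have e3 : n - r + r = n := Nat.sub_add_cancel (le_trans hrS hSn)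
  rw [hA]
  have key : ∀ cB k : ℕ, k * 2 ^ r = 2 ^ S.card →
      cB * k * 2 ^ (n - S.card) = cB * 2 ^ (n - r) := by
    intro cB k hk
    apply Nat.eq_of_mul_eq_mul_right (pow_pos (by norm_num : (0:ℕ) < 2) r)
    calc cB * k * 2 ^ (n - S.card) * 2 ^ r
        = cB * (2 ^ (n - S.card) * (k * 2 ^ r)) := by ring
      _ = cB * (2 ^ (n - S.card) * 2 ^ S.card) := by rw [hk]
      _ = cB * 2 ^ n := by rw [← pow_add, e2]
      _ = cB * 2 ^ (n - r) * 2 ^ r := by rw [mul_assoc, ← pow_add, e3]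
  exact key _ _ hker
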